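/- Let N ≥ 1 and 0 < c < 1/N. Any set of vectors in the standard simplex Δ^{N−1} ⊆ ℝ^N whose pairwise dot products are all < c has cardinality at most (1 + 2√N / √(2(1/N − c)))^{N−1} — in particular it is finite, with an explicit bound depending only on N and c. -/

import Mathlib

open MeasureTheory Metric Module ENNReal

lemma finset_packing {E : Type*} [NormedAddCommGroup E] [NormedSpace ℝ E]
    [MeasurableSpace E] [BorelSpace E] [FiniteDimensional ℝ E] [Nontrivial E]
    {R d : ℝ} (hR : 0 ≤ R) (hd : 0 < d) (F : Finset E)
    (hT : ∀ x ∈ F, ‖x‖ ≤ R)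
    (hsep : ∀ x ∈ F, ∀ y ∈ F, x ≠ y → d ≤ dist x y) :
    (F.card : ℝ) ≤ (1 + 2 * R / d) ^ (Module.finrank ℝ E) := by
  set n := Module.finrank ℝ E with hn
  set μ := (Module.finBasis ℝ E).addHaar with hμ
  set B := μ (ball (0 : E) 1) with hB
  have hB0 : B ≠ 0 := (measure_ball_pos μ 0 one_pos).ne'
  have hBt : B ≠ ⊤ := measure_ball_lt_top.ne
  have hd2 : (0 : ℝ) < d / 2 := by positivity
  have disj : (↑F : Set E).PairwiseDisjoint (fun x => ball x (d / 2)) := by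
    intro x hx y hy hxy
    exact ball_disjoint_ball (by linarith [hsep x hx y hy hxy])
  have hsum : ∑ x ∈ F, μ (ball x (d / 2)) = μ (⋃ x ∈ F, ball x (d / 2)) :=
    (measure_biUnion_finset disj fun _ _ => measurableSet_ball).symm
  have hsub : (⋃ x ∈ F, ball x (d / 2)) ⊆ closedBall 0 (R + d / 2) := by
    intro z hz
    simp only [Set.mem_iUnion] at hz
    obtain ⟨x, hx, hzx⟩ := hz
    rw [mem_closedBall, dist_zero_right]
    calc ‖z‖ = ‖z - x + x‖ := by rw [sub_add_cancel]
      _ ≤ ‖z - x‖ + ‖x‖ := norm_add_le _ _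
      _ ≤ d / 2 + R := by
          have := mem_ball_iff_norm.1 hzx
          exact add_le_add this.le (hT x hx)
      _ = R + d / 2 := by ring
  have key : (F.card : ℝ≥0∞) * (ENNReal.ofReal ((d / 2) ^ n) * B) ≤
      ENNReal.ofReal ((R + d / 2) ^ n) * B := by
    calc (F.card : ℝ≥0∞) * (ENNReal.ofReal ((d / 2) ^ n) * B)
        = ∑ x ∈ F, μ (ball x (d / 2)) := by
          rw [Finset.sum_congr rfl fun x _ => Measure.addHaar_ball μ x hd2.le]
          simp [Finset.sum_const, mul_comm]
          rfl
      _ = μ (⋃ x ∈ F, ball x (d / 2)) := hsum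
      _ ≤ μ (closedBall 0 (R + d / 2)) := measure_mono hsub
      _ = ENNReal.ofReal ((R + d / 2) ^ n) * B :=
          Measure.addHaar_closedBall μ 0 (by positivity)
  have hfactor : (R + d / 2) ^ n = (1 + 2 * R / d) ^ n * (d / 2) ^ n := by
    rw [← mul_pow]
    congr 1
    field_simp
    ring
  rw [hfactor, ENNReal.ofReal_mul (by positivity), mul_assoc] at key
  have key2 : (F.card : ℝ≥0∞) ≤ ENNReal.ofReal ((1 + 2 * R / d) ^ n) := by
    have ha : ENNReal.ofReal ((d / 2) ^ n) * B ≠ 0 :=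
      mul_ne_zero (ENNReal.ofReal_pos.2 (by positivity)).ne' hB0
    have ha' : ENNReal.ofReal ((d / 2) ^ n) * B ≠ ⊤ :=
      ENNReal.mul_ne_top ENNReal.ofReal_ne_top hBt
    exact (ENNReal.mul_le_mul_iff_left ha ha').1 key
  rw [← ENNReal.ofReal_natCast] at key2
  exact (ENNReal.ofReal_le_ofReal_iff (by positivity)).1 key2

lemma set_packing {E : Type*} [NormedAddCommGroup E] [NormedSpace ℝ E]
    [MeasurableSpace E] [BorelSpace E] [FiniteDimensional ℝ E] [Nontrivial E]
    {R d : ℝ} (hR : 0 ≤ R) (hd : 0 < d) (T : Set E)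
    (hT : ∀ x ∈ T, ‖x‖ ≤ R)
    (hsep : ∀ x ∈ T, ∀ y ∈ T, x ≠ y → d ≤ dist x y) :
    T.Finite ∧ (T.ncard : ℝ) ≤ (1 + 2 * R / d) ^ (Module.finrank ℝ E) := by
  set b : ℝ := (1 + 2 * R / d) ^ (Module.finrank ℝ E) with hb
  have key : ∀ F : Finset E, ↑F ⊆ T → (F.card : ℝ) ≤ b := fun F hF =>
    finset_packing hR hd F (fun x hx => hT x (hF hx))
      (fun x hx y hy hxy => hsep x (hF hx) y (hF hy) hxy)
  have hfin : T.Finite := by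
    by_contra h
    obtain ⟨t, htT, htfin, hcard⟩ := Set.Infinite.exists_subset_ncard_eq h (⌈b⌉₊ + 1)
    have h1 := key htfin.toFinset (by simpa using htT)
    rw [Set.ncard_eq_toFinset_card t htfin] at hcard
    rw [hcard] at h1
    have h2 := Nat.le_ceil b
    push_cast at h1
    linarith
  refine ⟨hfin, ?_⟩
  rw [Set.ncard_eq_toFinset_card T hfin]
  exact key _ (by simp)

lemma submodule_packing {E : Type*} [NormedAddCommGroup E] [NormedSpace ℝ E]
    [FiniteDimensional ℝ E] (W : Submodule ℝ E) [Nontrivial W]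
    {R d : ℝ} (hR : 0 ≤ R) (hd : 0 < d) (T : Set E) (hTW : T ⊆ (W : Set E))
    (hT : ∀ x ∈ T, ‖x‖ ≤ R)
    (hsep : ∀ x ∈ T, ∀ y ∈ T, x ≠ y → d ≤ dist x y) :
    T.Finite ∧ (T.ncard : ℝ) ≤ (1 + 2 * R / d) ^ (Module.finrank ℝ W) := by
  letI : MeasurableSpace W := borel W
  haveI : BorelSpace W := ⟨rfl⟩
  set T' : Set W := (Subtype.val) ⁻¹' T with hT'
  have himg : Subtype.val '' T' = T := by
    rw [hT', Set.image_preimage_eq_inter_range, Subtype.range_coe]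
    exact Set.inter_eq_left.2 hTW
  obtain ⟨hfin, hcard⟩ := set_packing (E := W) hR hd T'
    (fun x hx => hT x hx) (fun x hx y hy hxy => by
      have := hsep x hx y hy (fun h => hxy (Subtype.val_injective h))
      simpa [Subtype.dist_eq] using this)
  constructor
  · rw [← himg]; exact hfin.image _
  · rw [← himg, Set.ncard_image_of_injective T' Subtype.val_injective]
    exact hcard

/-- Explicit packing-type bound: any set of vectors in the standard simplex
`Δ^{N-1} ⊆ ℝ^N` with pairwise dot products `< c < 1/N` is finite, of cardinality
at most `(1 + 2√N / √(2(1/N - c)))^(N-1)`. -/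
theorem simplex_small_dot_card_bound (N : ℕ) (hN : 1 ≤ N) (c : ℝ) (hc : 0 < c)
    (hcN : c < 1 / N) (S : Set (Fin N → ℝ))
    (hS : ∀ x ∈ S, (∀ k, 0 ≤ x k) ∧ ∑ k, x k = 1)
    (hdot : ∀ x ∈ S, ∀ y ∈ S, x ≠ y → ∑ k, x k * y k < c) :
    S.Finite ∧
      (S.ncard : ℝ) ≤
        (1 + 2 * Real.sqrt N / Real.sqrt (2 * (1 / (N : ℝ) - c))) ^ (N - 1) := by
  have hN0 : (0 : ℝ) < N := by exact_mod_cast hN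
  have hN1 : (1 : ℝ) ≤ N := by exact_mod_cast hN
  rcases eq_or_lt_of_le hN with h1 | h2
  · -- N = 1
    subst h1
    have hsub : S ⊆ {fun _ => 1} := by
      intro x hx
      have h := (hS x hx).2
      rw [Fin.sum_univ_one] at h
      have hx1 : x = fun _ => 1 := funext fun k => by rw [Subsingleton.elim k 0]; exact h
      simp [hx1]
    refine ⟨(Set.finite_singleton _).subset hsub, ?_⟩
    have h1' := Set.ncard_le_ncard hsub (Set.finite_singleton _)
    simp only [Set.ncard_singleton] at h1'
    norm_num
    exact_mod_cast h1'
  · -- N ≥ 2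
    let φ : EuclideanSpace ℝ (Fin N) →ₗ[ℝ] ℝ :=
      { toFun := fun v => ∑ k, v k
        map_add' := fun v w => by
          simp [PiLp.add_apply, Finset.sum_add_distrib]
        map_smul' := fun r v => by
          simp [PiLp.smul_apply, smul_eq_mul, Finset.mul_sum] }
    have hsurj : Function.Surjective φ := by
      intro r
      refine ⟨(WithLp.equiv 2 (Fin N → ℝ)).symm (fun _ => r / N), ?_⟩
      show ∑ _k : Fin N, r / N = r
      rw [Finset.sum_const, Finset.card_univ, Fintype.card_fin, nsmul_eq_mul]
      field_simp
    set W := LinearMap.ker φ with hW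
    have hE' : Module.finrank ℝ (EuclideanSpace ℝ (Fin N)) = N := by
      rw [finrank_euclideanSpace, Fintype.card_fin]
    have hr1 : Module.finrank ℝ (LinearMap.range φ) = 1 := by
      rw [LinearMap.range_eq_top.2 hsurj, finrank_top, Module.finrank_self]
    have hrank : Module.finrank ℝ W = N - 1 := by
      have h := LinearMap.finrank_range_add_finrank_ker φ
      rw [hr1, hE'] at h
      rw [hW]
      omega
    haveI : Nontrivial W := Module.nontrivial_of_finrank_pos (R := ℝ)
      (by rw [hrank]; omega)
    set d := Real.sqrt (2 * (1 / (N : ℝ) - c)) with hd'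
    have hd : 0 < d := Real.sqrt_pos.2 (by nlinarith [hcN])
    set f : (Fin N → ℝ) → EuclideanSpace ℝ (Fin N) :=
      fun x => (WithLp.equiv 2 (Fin N → ℝ)).symm (fun k => x k - (N : ℝ)⁻¹) with hf
    have happ : ∀ x k, f x k = x k - (N : ℝ)⁻¹ := fun x k => rfl
    have hinj : Function.Injective f := by
      intro x y h
      have h' := congrArg (WithLp.equiv 2 (Fin N → ℝ)) h
      simp only [hf, Equiv.apply_symm_apply] at h'
      funext k
      have hk := congrFun h' k
      have hk : x k - (N:ℝ)⁻¹ = y k - (N:ℝ)⁻¹ := hk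
      linarith
    set T := f '' S with hT'
    have hsq_le : ∀ x ∈ S, ∑ k, (x k) ^ 2 ≤ 1 := by
      intro x hx
      obtain ⟨hpos, hsum⟩ := hS x hx
      calc ∑ k, (x k) ^ 2 ≤ ∑ k, x k := by
            refine Finset.sum_le_sum fun k _ => ?_
            have hle1 : x k ≤ 1 := by
              have h := Finset.single_le_sum (f := x) (fun i _ => hpos i)
                (Finset.mem_univ k)
              rw [hsum] at h
              exact h
            nlinarith [hpos k]
        _ = 1 := hsum
    have hsq_ge : ∀ x ∈ S, (N : ℝ)⁻¹ ≤ ∑ k, (x k) ^ 2 := by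
      intro x hx
      obtain ⟨hpos, hsum⟩ := hS x hx
      have h := sq_sum_le_card_mul_sum_sq (s := Finset.univ) (f := x)
      rw [hsum, Finset.card_univ, Fintype.card_fin] at h
      have h' : (1 : ℝ) ≤ N * ∑ k, x k ^ 2 := by simpa using h
      have h'' := mul_le_mul_of_nonneg_left h' (by positivity : (0:ℝ) ≤ (N:ℝ)⁻¹)
      rw [← mul_assoc, inv_mul_cancel₀ hN0.ne', one_mul, mul_one] at h''
      exact h''
    have hshift : ∀ x ∈ S, ∑ k, (x k - (N : ℝ)⁻¹) ^ 2 = ∑ k, (x k) ^ 2 - (N : ℝ)⁻¹ := by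
      intro x hx
      have hterm : ∀ k : Fin N, (x k - (N:ℝ)⁻¹) ^ 2
          = x k ^ 2 - 2 * (N:ℝ)⁻¹ * x k + (N:ℝ)⁻¹ ^ 2 := fun k => by ring
      rw [Finset.sum_congr rfl fun k _ => hterm k, Finset.sum_add_distrib,
        Finset.sum_sub_distrib, ← Finset.mul_sum, (hS x hx).2, Finset.sum_const,
        Finset.card_univ, Fintype.card_fin, nsmul_eq_mul]
      field_simp
      ring
    have hTW : T ⊆ (W : Set (EuclideanSpace ℝ (Fin N))) := by
      rintro v ⟨x, hx, rfl⟩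
      obtain ⟨hpos, hsum⟩ := hS x hx
      show (∑ k, (x k - (N : ℝ)⁻¹)) = 0
      rw [Finset.sum_sub_distrib, hsum, Finset.sum_const, Finset.card_univ,
        Fintype.card_fin, nsmul_eq_mul]
      field_simp
      norm_num
    have hnorm : ∀ v ∈ T, ‖v‖ ≤ Real.sqrt N := by
      rintro v ⟨x, hx, rfl⟩
      rw [EuclideanSpace.norm_eq]
      apply Real.sqrt_le_sqrt
      have hNinv : (0:ℝ) < (N : ℝ)⁻¹ := by positivity
      calc ∑ k, ‖f x k‖ ^ 2 = ∑ k, (x k - (N : ℝ)⁻¹) ^ 2 := by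
            simp [happ, sq_abs]
        _ = ∑ k, (x k) ^ 2 - (N : ℝ)⁻¹ := hshift x hx
        _ ≤ (N : ℝ) := by have := hsq_le x hx; linarith
    have hsep : ∀ u ∈ T, ∀ v ∈ T, u ≠ v → d ≤ dist u v := by
      rintro u ⟨x, hx, rfl⟩ v ⟨y, hy, rfl⟩ huv
      have hxy : x ≠ y := fun h => huv (by rw [h])
      rw [EuclideanSpace.dist_eq]
      apply Real.sqrt_le_sqrt
      have hdk : ∀ k : Fin N, dist (f x k) (f y k) ^ 2 = (x k - y k) ^ 2 := by
        intro k
        rw [Real.dist_eq, sq_abs, happ, happ]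
        ring_nf
      rw [Finset.sum_congr rfl fun k _ => hdk k]
      have hexp : ∑ k, (x k - y k) ^ 2
          = ∑ k, (x k) ^ 2 + ∑ k, (y k) ^ 2 - 2 * ∑ k, x k * y k := by
        rw [Finset.mul_sum, ← Finset.sum_add_distrib, ← Finset.sum_sub_distrib]
        exact Finset.sum_congr rfl fun k _ => by ring
      rw [hexp]
      have h1 := hsq_ge x hx
      have h2 := hsq_ge y hy
      have h3 := hdot x hx y hy hxy
      have h4 : (N:ℝ)⁻¹ = 1 / N := (one_div _).symm
      nlinarith
    obtain ⟨hfinT, hcardT⟩ :=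
      submodule_packing W (Real.sqrt_nonneg _) hd T hTW hnorm hsep
    refine ⟨Set.Finite.of_finite_image hfinT hinj.injOn, ?_⟩
    rw [← Set.ncard_image_of_injective S hinj]
    rw [hrank] at hcardT
    exact hcardT
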